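/- Let $A$ and $B$ be discrete valuation rings of characteristic $p$, with $B \subseteq A$ the invariant subring for a totally ramified $\mathbb{Z}/p^m\mathbb{Z}$-grading of $A$ (so that the degree-zero part of the grading of $A$ of type $\mathbb{Z}/p^n\mathbb{Z}$, restricted along the subgroup, is $B$, and $A$ is free of rank $p^m$ over $B$ with the image $g^\sharp(\pi')$ of a uniformizer $\pi'$ of $B$ lying in the graded piece of degree $p^m$). Then $v_A(g^\sharp(\pi')) = p^m$, where $v_A$ is the valuation of $A$. Consequently, with $\mathfrak{m}_G$, $\mathfrak{m}_H$, $g^*\mathfrak{m}_{G/H}$ the augmentation modules of the respective stabilizers, $\ell_A(\mathfrak{m}_G) = p^n - 1 = (p^m - 1) + p^m(p^{n-m} - 1) = \ell_A(\mathfrak{m}_H) + \ell_A(g^*\mathfrak{m}_{G/H})$, which is the local multiplicity identity $\mathrm{R}_G = \mathrm{R}_H + g^*\mathrm{R}_{G/H}$. -/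

import Mathlib

open IsDiscreteValuationRing

section Val
variable {R : Type*} [CommRing R] [IsDomain R] [IsDiscreteValuationRing R]

lemma addVal_of_assoc {π : R} (hπ : Irreducible π) {y : R} {n : ℕ}
    (h : Associated (π ^ n) y) : addVal R y = n := by
  obtain ⟨u, rfl⟩ := h
  exact addVal_def _ u hπ n (mul_comm _ _)

lemma le_addVal_sum {ι : Type*} (s : Finset ι) (f : ι → R) (C : ℕ∞)
    (h : ∀ i ∈ s, C ≤ addVal R (f i)) : C ≤ addVal R (∑ i ∈ s, f i) := by
  classical
  induction s using Finset.cons_induction with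
  | empty => simp [addVal_zero]
  | cons a s ha ih =>
    rw [Finset.sum_cons]
    exact le_trans (le_min (h a (Finset.mem_cons_self a s))
      (ih fun i hi => h i (Finset.mem_cons_of_mem hi))) (addVal_add)

end Val

noncomputable def QN {R : Type*} [CommRing R] (x π : R) (j : ℕ) :
    Submodule R (R ⧸ Ideal.span {x}) :=
  Submodule.span R {Ideal.Quotient.mk (Ideal.span {x}) (π ^ j)}

section QN
set_option linter.unusedSectionVars false
variable {R : Type*} [CommRing R] [IsDomain R] [IsDiscreteValuationRing R]

lemma QN_smul_mk (x : R) (r y : R) :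
    r • Ideal.Quotient.mk (Ideal.span {x}) y = Ideal.Quotient.mk (Ideal.span {x}) (r * y) := rfl

lemma QN_top {π x : R} : QN x π 0 = ⊤ := by
  rw [Submodule.eq_top_iff']
  intro q
  obtain ⟨r, rfl⟩ := Ideal.Quotient.mk_surjective q
  exact Submodule.mem_span_singleton.2 ⟨r, by rw [pow_zero, QN_smul_mk, mul_one]⟩

lemma QN_bot {π x : R} {e : ℕ} (hx : Associated (π ^ e) x) : QN x π e = ⊥ := by
  have : Ideal.Quotient.mk (Ideal.span {x}) (π ^ e) = 0 :=
    Ideal.Quotient.eq_zero_iff_mem.2 (Ideal.mem_span_singleton.2 hx.symm.dvd)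
  rw [QN, this, Submodule.span_zero_singleton]

lemma QN_covby {π x : R} (hπ : Irreducible π) {e : ℕ} (hx : Associated (π ^ e) x)
    {j : ℕ} (hj : j + 1 ≤ e) : QN x π (j + 1) ⋖ QN x π j := by
  have hle : QN x π (j + 1) ≤ QN x π j := by
    rw [QN, Submodule.span_le, Set.singleton_subset_iff]
    exact Submodule.mem_span_singleton.2 ⟨π, by rw [QN_smul_mk, ← pow_succ']⟩
  have hmem : Ideal.Quotient.mk (Ideal.span {x}) (π ^ j) ∉ QN x π (j + 1) := by
    intro h
    obtain ⟨a, ha⟩ := Submodule.mem_span_singleton.1 h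
    rw [QN_smul_mk] at ha
    have hdvd : x ∣ a * π ^ (j + 1) - π ^ j :=
      Ideal.mem_span_singleton.1 ((Ideal.Quotient.eq).1 ha)
    have h1 : π ^ (j + 1) ∣ π ^ j := by
      have h2 : π ^ (j + 1) ∣ a * π ^ (j + 1) - π ^ j :=
        dvd_trans (dvd_trans (pow_dvd_pow π hj) hx.dvd) hdvd
      have h3 : π ^ (j + 1) ∣ a * π ^ (j + 1) := Dvd.intro a (mul_comm _ _)
      simpa using (dvd_sub h3 h2)
    rw [pow_succ] at h1
    have : π ^ j * π ∣ π ^ j * 1 := by simpa using h1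
    exact hπ.not_isUnit (isUnit_of_dvd_one
      ((mul_dvd_mul_iff_left (pow_ne_zero j hπ.ne_zero)).1 this))
  have hlt : QN x π (j + 1) < QN x π j :=
    lt_of_le_of_ne hle (fun heq => hmem (heq ▸ Submodule.mem_span_singleton_self _))
  refine ⟨hlt, fun W h1 h2 => ?_⟩
  -- show contradiction from QN (j+1) < W < QN j
  obtain ⟨w, hwW, hw⟩ := SetLike.exists_of_lt h1
  obtain ⟨a, ha⟩ := Submodule.mem_span_singleton.1 (h2.le hwW)
  have haπ : ¬ π ∣ a := by
    rintro ⟨b, rfl⟩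
    apply hw
    refine Submodule.mem_span_singleton.2 ⟨b, ?_⟩
    rw [QN_smul_mk, ← ha, QN_smul_mk]
    ring_nf
  have hu : IsUnit a := by
    by_contra hnu
    exact haπ (Ideal.mem_span_singleton.1 (hπ.maximalIdeal_eq ▸
      (IsLocalRing.mem_maximalIdeal a).2 hnu))
  obtain ⟨u, rfl⟩ := hu
  have hmemW : Ideal.Quotient.mk (Ideal.span {x}) (π ^ j) ∈ W := by
    have : ((u⁻¹ : Rˣ) : R) • w = Ideal.Quotient.mk (Ideal.span {x}) (π ^ j) := by
      rw [← ha, smul_smul, Units.inv_mul, one_smul]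
    exact this ▸ W.smul_mem _ hwW
  have : QN x π j ≤ W := by
    rw [QN, Submodule.span_le, Set.singleton_subset_iff]; exact hmemW
  exact h2.ne (le_antisymm h2.le this)

end QN

section Pi
variable {R M : Type*} [CommRing R] [AddCommGroup M] [Module R M] {ι : Type*}

lemma pi_univ_bot : Submodule.pi Set.univ (fun _ : ι => (⊥ : Submodule R M)) = ⊥ := by
  ext f
  simp [Submodule.mem_pi, funext_iff]

lemma pi_univ_top : Submodule.pi Set.univ (fun _ : ι => (⊤ : Submodule R M)) = ⊤ := by
  ext f; simp [Submodule.mem_pi]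

lemma pi_covby [DecidableEq ι] (D D' : ι → Submodule R M) (q : ι)
    (hq : D q ⋖ D' q) (heq : ∀ i, i ≠ q → D i = D' i) :
    Submodule.pi Set.univ D ⋖ Submodule.pi Set.univ D' := by
  have hDle : ∀ i, D i ≤ D' i := fun i => by
    rcases eq_or_ne i q with rfl | h
    · exact hq.le
    · exact (heq i h).le
  have hle : Submodule.pi Set.univ D ≤ Submodule.pi Set.univ D' := fun f hf i hi =>
    hDle i (hf i hi)
  obtain ⟨y, hy', hy⟩ := SetLike.exists_of_lt hq.lt
  have hlt : Submodule.pi Set.univ D < Submodule.pi Set.univ D' := by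
    refine lt_of_le_of_ne hle (fun hEQ => hy ?_)
    have : Function.update (0 : ι → M) q y ∈ Submodule.pi Set.univ D' := by
      intro i _
      rcases eq_or_ne i q with rfl | h
      · rwa [Function.update_self]
      · rw [Function.update_of_ne h]; exact (D' i).zero_mem
    rw [← hEQ] at this
    simpa using this q trivial
  refine ⟨hlt, fun W h1 h2 => ?_⟩
  obtain ⟨w, hwW, hw⟩ := SetLike.exists_of_lt h1
  have hw' : ∀ i, w i ∈ D' i := fun i => h2.le hwW i trivial
  have hwD : ∀ i, i ≠ q → w i ∈ D i := fun i hi => (heq i hi) ▸ hw' i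
  have hwq : w q ∉ D q := by
    intro h
    exact hw (fun i _ => by
      rcases eq_or_ne i q with rfl | hne
      · exact h
      · exact hwD i hne)
  have hsup : D q ⊔ Submodule.span R {w q} = D' q := by
    have hlt' : D q < D q ⊔ Submodule.span R {w q} :=
      lt_of_le_of_ne le_sup_left (fun h =>
        hwq (h ▸ (le_sup_right (a := D q) (Submodule.mem_span_singleton_self (w q)))))
    have hle' : D q ⊔ Submodule.span R {w q} ≤ D' q :=
      sup_le hq.le ((Submodule.span_le).2 (Set.singleton_subset_iff.2 (hw' q)))
    exact hle'.lt_or_eq.resolve_left (hq.2 hlt')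
  have hkey : Submodule.pi Set.univ D' ≤ W := by
    intro f hf
    have hfq : f q ∈ D q ⊔ Submodule.span R {w q} := hsup ▸ hf q trivial
    obtain ⟨d, hd, z, hz, hdz⟩ := Submodule.mem_sup.1 hfq
    obtain ⟨a, rfl⟩ := Submodule.mem_span_singleton.1 hz
    have hsub : f - a • w ∈ Submodule.pi Set.univ D := by
      intro i _
      rcases eq_or_ne i q with rfl | hne
      · have : f i - a • w i = d := by rw [← hdz]; abel
        simpa [this] using hd
      · exact sub_mem ((heq i hne) ▸ hf i trivial) ((D i).smul_mem a (hwD i hne))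
    have : f = (f - a • w) + a • w := by abel
    rw [this]
    exact W.add_mem (h1.le hsub) (W.smul_mem a hwW)
  exact h2.ne (le_antisymm h2.le hkey)

end Pi

section CS
variable {R : Type*} [CommRing R] [IsDomain R] [IsDiscreteValuationRing R]

lemma exists_cs {π : R} (hπ : Irreducible π) (x : R) {e : ℕ} (he : 0 < e)
    (hx : Associated (π ^ e) x) (k : ℕ) :
    ∃ s : CompositionSeries (Submodule R (Fin k → R ⧸ Ideal.span {x})),
      s.head = ⊥ ∧ s.last = ⊤ ∧ s.length = k * e := by
  classical
  refine ⟨⟨k * e,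
    fun t => Submodule.pi Set.univ (fun i : Fin k => QN x π (e - ((t : ℕ) - (i : ℕ) * e))),
    ?_⟩, ?_, ?_, rfl⟩
  · -- steps
    intro t
    set T : ℕ := (t : ℕ) with hT
    have hTlt : T < k * e := t.isLt
    set q : ℕ := T / e with hqdef
    set r : ℕ := T % e with hrdef
    have h1 : e * q + r = T := Nat.div_add_mod T e
    have h2 : r < e := Nat.mod_lt _ he
    have hqk : q < k := (Nat.div_lt_iff_lt_mul he).2 hTlt
    have hcast : ((t.castSucc : Fin (k * e + 1)) : ℕ) = T := rfl
    have hsucc : ((t.succ : Fin (k * e + 1)) : ℕ) = T + 1 := rfl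
    show Submodule.pi Set.univ _ ⋖ Submodule.pi Set.univ _
    refine pi_covby _ _ (⟨q, hqk⟩ : Fin k) ?_ ?_
    · -- covby at coordinate q
      rw [hcast, hsucc]
      have hqe : (((⟨q, hqk⟩ : Fin k) : ℕ)) * e = e * q := mul_comm _ _
      have hA : e - (T - ((⟨q, hqk⟩ : Fin k) : ℕ) * e) = (e - r - 1) + 1 := by
        rw [hqe]; omega
      have hB : e - (T + 1 - ((⟨q, hqk⟩ : Fin k) : ℕ) * e) = e - r - 1 := by
        rw [hqe]; omega
      rw [hA, hB]
      exact QN_covby hπ hx (by omega)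
    · -- other coordinates
      intro i hi
      rw [hcast, hsucc]
      congr 1
      have hne : (i : ℕ) ≠ q := fun h => hi (Fin.ext h)
      rcases lt_or_gt_of_ne hne with hlt | hgt
      · have hmul : ((i : ℕ) + 1) * e ≤ q * e := Nat.mul_le_mul_right e hlt
        rw [add_one_mul] at hmul
        have hq' : q * e = e * q := mul_comm _ _
        omega
      · have hmul : (q + 1) * e ≤ (i : ℕ) * e := Nat.mul_le_mul_right e hgt
        rw [add_one_mul] at hmul
        have hq' : q * e = e * q := mul_comm _ _
        omega
  · -- head
    show Submodule.pi Set.univ _ = ⊥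
    have : ∀ i : Fin k,
        QN x π (e - (((0 : Fin (k * e + 1)) : ℕ) - (i : ℕ) * e)) = (⊥ : Submodule R _) := by
      intro i
      have h0 : ((0 : Fin (k * e + 1)) : ℕ) = 0 := rfl
      rw [h0, Nat.zero_sub, Nat.sub_zero]
      exact QN_bot hx
    simp only [this]
    exact pi_univ_bot
  · -- last
    show Submodule.pi Set.univ _ = ⊤
    have : ∀ i : Fin k,
        QN x π (e - (((Fin.last (k * e)) : ℕ) - (i : ℕ) * e)) = (⊤ : Submodule R _) := by
      intro i
      have h0 : ((Fin.last (k * e)) : ℕ) = k * e := rfl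
      have hik : (i : ℕ) + 1 ≤ k := i.isLt
      have hmul : ((i : ℕ) + 1) * e ≤ k * e := Nat.mul_le_mul_right e hik
      rw [add_one_mul] at hmul
      have hexp : e - (k * e - (i : ℕ) * e) = 0 := by omega
      rw [h0, hexp]
      exact QN_top
    simp only [this]
    exact pi_univ_top

end CS


/-- dévissage of a totally ramified `μ_{pⁿ}`-covering at a
codimension-1 point: `A` a DVR of characteristic `p` with grading
`A = ⊕_{i ∈ ℤ/pⁿℤ} A₀ πⁱ` (`π` a uniformizer), `B ⊆ A` the invariant DVR for the
subgroup `μ_{pᵐ}` with `A` free of rank `pᵐ` over `B` and the image of a uniformizer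
`π'` of `B` lying in the graded piece `A₀ π^{pᵐ}`. Then `v_A(π') = pᵐ`, and the
lengths of the augmentation modules `𝔪_G ≅ (A/π)^{pⁿ-1}`, `𝔪_H ≅ (A/π)^{pᵐ-1}`,
`g^*𝔪_{G/H} ≅ (A/π')^{p^{n-m}-1}` satisfy
`ℓ(𝔪_G) = pⁿ - 1 = (pᵐ - 1) + pᵐ(p^{n-m} - 1) = ℓ(𝔪_H) + ℓ(g^*𝔪_{G/H})`,
the local identity `R_G = R_H + g^* R_{G/H}`. -/
theorem stmt19 {A₀ B A : Type*} [CommRing A₀]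
    [CommRing B] [IsDomain B] [IsDiscreteValuationRing B]
    [CommRing A] [IsDomain A] [IsDiscreteValuationRing A]
    {p : ℕ} (hp : p.Prime) [CharP A p] [CharP B p]
    [Algebra A₀ A] [Algebra B A] {m n : ℕ} (hmn : m ≤ n)
    (bB : Module.Basis (Fin (p ^ m)) B A)
    (π : A) (hπ : Irreducible π)
    (bA : Module.Basis (ZMod (p ^ n)) A₀ A) (hbA : ∀ i, bA i = π ^ (ZMod.val i))
    (π' : B) (hπ' : Irreducible π')
    (c : A₀) (hc : algebraMap B A π' = algebraMap A₀ A c * π ^ p ^ m) :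
    IsDiscreteValuationRing.addVal A (algebraMap B A π') = (p ^ m : ℕ) ∧
    (∃ s : CompositionSeries (Submodule A (Fin (p ^ n - 1) → A ⧸ Ideal.span {π})),
      s.head = ⊥ ∧ s.last = ⊤ ∧ s.length = p ^ n - 1) ∧
    (∃ s : CompositionSeries (Submodule A (Fin (p ^ m - 1) → A ⧸ Ideal.span {π})),
      s.head = ⊥ ∧ s.last = ⊤ ∧ s.length = p ^ m - 1) ∧
    (∃ s : CompositionSeries (Submodule A
        (Fin (p ^ (n - m) - 1) → A ⧸ Ideal.span {algebraMap B A π'})),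
      s.head = ⊥ ∧ s.last = ⊤ ∧ s.length = p ^ m * (p ^ (n - m) - 1)) ∧
    p ^ n - 1 = (p ^ m - 1) + p ^ m * (p ^ (n - m) - 1) := by
  
  classical
  -- injectivity of `algebraMap B A`
  have injB : Function.Injective (algebraMap B A) := by
    rw [injective_iff_map_eq_zero]
    intro b hb
    by_contra hb0
    have h1 : b • (1 : A) = 0 := by rw [Algebra.smul_def, mul_one, hb]
    have h2 : bB.repr (b • (1 : A)) = b • bB.repr 1 := by rw [map_smul]
    rw [h1, map_zero] at h2
    have h3 : bB.repr 1 = 0 := by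
      ext i
      have := congrArg (fun l => l i) h2
      simp only [Finsupp.smul_apply, Finsupp.coe_zero, Pi.zero_apply, smul_eq_mul] at this
      rcases mul_eq_zero.1 this.symm with h | h
      · exact absurd h hb0
      · simpa using h
    have : (1 : A) = 0 := by
      apply bB.repr.injective
      rw [h3, map_zero]
    exact one_ne_zero this
  have ha0 : algebraMap B A π' ≠ 0 := fun h => hπ'.ne_zero (injB (by rw [h, map_zero]))
  obtain ⟨E, hE⟩ := IsDiscreteValuationRing.associated_pow_irreducible ha0 hπ
  have hcA0 : algebraMap A₀ A c ≠ 0 := by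
    intro h
    rw [h, zero_mul] at hc
    exact ha0 hc
  obtain ⟨d, hd⟩ := IsDiscreteValuationRing.associated_pow_irreducible hcA0 hπ
  have hEd : E = d + p ^ m := by
    have hv1 : IsDiscreteValuationRing.addVal A (algebraMap B A π') = E :=
      addVal_of_assoc hπ hE.symm
    have hv2 : IsDiscreteValuationRing.addVal A (algebraMap B A π') = (d + p ^ m : ℕ) := by
      refine addVal_of_assoc hπ ?_
      rw [hc, pow_add]
      exact hd.symm.mul_right _
    rw [hv1] at hv2
    exact_mod_cast hv2
  -- every nonzero element of B has valuation a multiple of E in A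
  have hval : ∀ b : B, b ≠ 0 → ∃ kk : ℕ,
      Associated (π ^ (E * kk)) (algebraMap B A b) := by
    intro b hb
    obtain ⟨kk, hkk⟩ := IsDiscreteValuationRing.associated_pow_irreducible hb hπ'
    refine ⟨kk, ?_⟩
    have h1 : Associated (algebraMap B A b) ((algebraMap B A π') ^ kk) := by
      rw [← map_pow]
      exact hkk.map (algebraMap B A).toMonoidHom
    have h2 : Associated ((algebraMap B A π') ^ kk) (π ^ (E * kk)) := by
      have h3 := hE.pow_pow (n := kk)
      rwa [← pow_mul] at h3
    exact (h1.trans h2).symm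
  -- linear independence of 1, π, ..., π^(E-1) over B
  have li : LinearIndependent B (fun i : Fin E => π ^ (i : ℕ)) := by
    rw [Fintype.linearIndependent_iff]
    intro g hg
    by_contra hex
    push_neg at hex
    obtain ⟨i₁, hi₁⟩ := hex
    set v := IsDiscreteValuationRing.addVal A with hv
    set f : Fin E → A := fun i => g i • π ^ (i : ℕ) with hf
    have hfz : ∀ i, g i = 0 → f i = 0 := fun i h => by simp [hf, h]
    set S : Finset (Fin E) := Finset.univ.filter (fun i => g i ≠ 0) with hSdef
    have hS : S.Nonempty := ⟨i₁, by simp [hSdef, hi₁]⟩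
    have key : ∀ i : Fin E, g i ≠ 0 → ∃ N : ℕ, v (f i) = ((E * N + (i : ℕ) : ℕ) : ℕ∞) := by
      intro i hi
      obtain ⟨N, hN⟩ := hval (g i) hi
      refine ⟨N, ?_⟩
      have hfi : f i = algebraMap B A (g i) * π ^ (i : ℕ) := Algebra.smul_def _ _
      rw [hfi, hv, IsDiscreteValuationRing.addVal_mul, addVal_of_assoc hπ hN,
        hπ.addVal_pow, Nat.cast_add]
    have hdistinct : ∀ i ∈ S, ∀ j ∈ S, v (f i) = v (f j) → i = j := by
      intro i hi j hj hvij
      have hgi : g i ≠ 0 := (Finset.mem_filter.1 hi).2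
      have hgj : g j ≠ 0 := (Finset.mem_filter.1 hj).2
      obtain ⟨Ni, hNi⟩ := key i hgi
      obtain ⟨Nj, hNj⟩ := key j hgj
      rw [hNi, hNj, Nat.cast_inj] at hvij
      have hmodi := Nat.mul_add_mod E Ni (i : ℕ)
      have hmodj := Nat.mul_add_mod E Nj (j : ℕ)
      have : (i : ℕ) % E = (j : ℕ) % E := by rw [← hmodi, ← hmodj, hvij]
      rw [Nat.mod_eq_of_lt i.isLt, Nat.mod_eq_of_lt j.isLt] at this
      exact Fin.ext this
    obtain ⟨i₀, hi₀S, hmin⟩ := S.exists_min_image (fun i => v (f i)) hS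
    have hgi₀ : g i₀ ≠ 0 := (Finset.mem_filter.1 hi₀S).2
    have hfi₀ : f i₀ ≠ 0 := by
      have : f i₀ = algebraMap B A (g i₀) * π ^ (i₀ : ℕ) := Algebra.smul_def _ _
      rw [this]
      exact mul_ne_zero (fun h => hgi₀ (injB (by rw [h, map_zero])))
        (pow_ne_zero _ hπ.ne_zero)
    have hsum : ∑ i ∈ S, f i = 0 := by
      have hss : ∑ i ∈ S, f i = ∑ i ∈ Finset.univ, f i :=
        Finset.sum_subset (Finset.subset_univ S)
          (fun x _ hx => hfz x (by simpa [hSdef] using hx))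
      rw [hss]
      exact hg
    have herase : f i₀ = -∑ i ∈ S.erase i₀, f i := by
      have h4 := Finset.add_sum_erase S f hi₀S
      rw [hsum] at h4
      exact eq_neg_of_add_eq_zero_left h4
    have htop : v (f i₀) ≠ ⊤ := fun h =>
      hfi₀ (IsDiscreteValuationRing.addVal_eq_top_iff.1 h)
    have hbound : v (f i₀) + 1 ≤ v (∑ i ∈ S.erase i₀, f i) := by
      refine le_addVal_sum _ _ _ (fun j hj => ?_)
      obtain ⟨hjne, hjS⟩ := Finset.mem_erase.1 hj
      have hlt : v (f i₀) < v (f j) :=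
        lt_of_le_of_ne (hmin j hjS) (fun h => hjne (hdistinct i₀ hi₀S j hjS h).symm)
      exact (ENat.add_one_le_iff htop).2 hlt
    have hcontr : v (f i₀) + 1 ≤ v (f i₀) := by
      have hneg : v (f i₀) = v (∑ i ∈ S.erase i₀, f i) := by
        rw [herase, neg_eq_neg_one_mul, hv, IsDiscreteValuationRing.addVal_mul]
        have hm1 : IsDiscreteValuationRing.addVal A (-1 : A) = ((0 : ℕ) : ℕ∞) :=
          IsDiscreteValuationRing.addVal_def (-1 : A) (-1 : Aˣ) hπ 0 (by simp)
        rw [hm1, Nat.cast_zero, zero_add]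
      exact hbound.trans hneg.ge
    exact absurd ((ENat.add_one_le_iff htop).1 hcontr) (lt_irrefl _)
  -- rank bound : E ≤ p ^ m
  have : Module.Finite B A := Module.Finite.of_basis bB
  have hEle : E ≤ p ^ m := by
    have hcard := li.fintype_card_le_finrank
    rwa [Fintype.card_fin, Module.finrank_eq_card_basis bB, Fintype.card_fin] at hcard
  have hd0 : d = 0 := by omega
  have hcunit : IsUnit (algebraMap A₀ A c) := by
    rw [hd0, pow_zero] at hd
    exact associated_one_iff_isUnit.1 hd
  have hassoc : Associated (π ^ p ^ m) (algebraMap B A π') := by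
    obtain ⟨u, hu⟩ := hcunit
    exact ⟨u, by rw [hc, ← hu, mul_comm]⟩
  have hpm1 : 1 ≤ p ^ m := Nat.one_le_pow _ _ hp.pos
  have hpnm1 : 1 ≤ p ^ (n - m) := Nat.one_le_pow _ _ hp.pos
  refine ⟨addVal_of_assoc hπ hassoc, ?_, ?_, ?_, ?_⟩
  · obtain ⟨s, h1, h2, h3⟩ := exists_cs hπ π one_pos (by rw [pow_one]) (p ^ n - 1)
    exact ⟨s, h1, h2, by rw [h3, mul_one]⟩
  · obtain ⟨s, h1, h2, h3⟩ := exists_cs hπ π one_pos (by rw [pow_one]) (p ^ m - 1)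
    exact ⟨s, h1, h2, by rw [h3, mul_one]⟩
  · obtain ⟨s, h1, h2, h3⟩ := exists_cs hπ (algebraMap B A π')
      (Nat.pow_pos (n := m) hp.pos) hassoc (p ^ (n - m) - 1)
    exact ⟨s, h1, h2, by rw [h3, mul_comm]⟩
  · have h1 : p ^ n = p ^ m * p ^ (n - m) := by
      rw [← pow_add, Nat.add_sub_cancel' hmn]
    have h2 : p ^ m * (p ^ (n - m) - 1) = p ^ m * p ^ (n - m) - p ^ m := by
      rw [Nat.mul_sub, mul_one]
    have h3 : p ^ m ≤ p ^ m * p ^ (n - m) :=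
      Nat.le_mul_of_pos_right _ (Nat.pow_pos hp.pos)
    omega
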